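/- Let V = (F_2)^n and ρ₁, ρ₂ permutations of V, neither of which is affine, with 0ρ₁ = 0ρ₂ = 0, and let ρ̄₁, ρ̄₂ be their Feistel operators on V × V. Suppose 𝒰₁, 𝒰₂ are non-trivial proper subgroups of V × V such that ρ̄₁ maps the coset partition of 𝒰₁ into the coset partition of 𝒰₂ (for each (v₁,w₁) there is (v₂,w₂) with (𝒰₁ + (v₁,w₁))ρ̄₁ = 𝒰₂ + (v₂,w₂)) and ρ̄₂ maps the coset partition of 𝒰₂ into that of 𝒰₁. Then there exist non-trivial proper subgroups U₁, W₁ of V such that ρ₁ maps the linear partition 𝓛(U₁) into 𝓛(W₁), i.e., for each v ∈ V there exists w ∈ V with (U₁ + v)ρ₁ = W₁ + w. -/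

import Mathlib

abbrev Vn (n : ℕ) := Fin n → ZMod 2

/-- The Feistel operator `(x₁, x₂) ↦ (x₂, x₁ + ρ x₂)` on `V × V`. -/
def feistel {n : ℕ} (ρ : Equiv.Perm (Vn n)) : Vn n × Vn n → Vn n × Vn n :=
  fun x => (x.2, x.1 + ρ x.2)

/-- The coset `S + v` of a subset `S` of an additive group. -/
def coset {α : Type*} [Add α] (S : Set α) (v : α) : Set α :=
  (fun x => x + v) '' S

/-- `ρ` is an affine permutation of `V`: `x ↦ L x + c` with `L` linear. -/
def IsAffinePerm {n : ℕ} (ρ : Equiv.Perm (Vn n)) : Prop :=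
  ∃ (L : Vn n →ₗ[ZMod 2] Vn n) (c : Vn n), ∀ x, ρ x = L x + c

namespace Stmt14Aux

lemma addself {n : ℕ} (x : Vn n) : x + x = 0 := by
  funext i
  have h : ∀ a : ZMod 2, a + a = 0 := by decide
  exact h (x i)

lemma addself2 {n : ℕ} (x : Vn n × Vn n) : x + x = 0 :=
  Prod.ext (addself x.1) (addself x.2)

lemma mem_coset {α : Type*} [AddCommGroup α] (h2 : ∀ x : α, x + x = 0)
    (S : Set α) (z x : α) : x ∈ coset S z ↔ x + z ∈ S := by
  constructor
  · rintro ⟨s, hs, rfl⟩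
    rwa [add_assoc, h2, add_zero]
  · intro h
    exact ⟨x + z, h, by show x + z + z = x; rw [add_assoc, h2, add_zero]⟩

lemma feistel_struct {n : ℕ} (ρ : Equiv.Perm (Vn n)) (hρ : ρ 0 = 0)
    (𝒜 ℬ : AddSubgroup (Vn n × Vn n))
    (h : ∀ z, ∃ z', feistel ρ '' coset (𝒜 : Set (Vn n × Vn n)) z
        = coset (ℬ : Set (Vn n × Vn n)) z') :
    (∀ x : Vn n × Vn n, x ∈ ℬ ↔ ∃ u₁ u₂, (u₁, u₂) ∈ 𝒜 ∧ x = (u₂, u₁ + ρ u₂)) ∧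
    (∀ u₁ u₂, (u₁, u₂) ∈ 𝒜 → ∀ w, (ρ (u₂ + w) + ρ w + ρ u₂, 0) ∈ 𝒜) := by
  have h2 := addself2 (n := n)
  obtain ⟨z₀, hz₀⟩ := h 0
  have hc : coset (𝒜 : Set (Vn n × Vn n)) 0 = (𝒜 : Set (Vn n × Vn n)) := by
    simp [coset]
  rw [hc] at hz₀
  have h00 : ((0,0) : Vn n × Vn n) ∈ feistel ρ '' (𝒜 : Set (Vn n × Vn n)) :=
    ⟨(0,0), 𝒜.zero_mem, by simp [feistel, hρ]⟩
  have hz₀mem : z₀ ∈ ℬ := by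
    rw [hz₀] at h00
    have := (mem_coset h2 _ _ _).1 h00
    rwa [show ((0,0) : Vn n × Vn n) = 0 from rfl, zero_add] at this
  have himg : feistel ρ '' (𝒜 : Set (Vn n × Vn n)) = (ℬ : Set (Vn n × Vn n)) := by
    rw [hz₀]
    ext x
    rw [mem_coset h2]
    exact ℬ.add_mem_cancel_right hz₀mem
  have part1 : ∀ x : Vn n × Vn n, x ∈ ℬ ↔ ∃ u₁ u₂, (u₁, u₂) ∈ 𝒜 ∧ x = (u₂, u₁ + ρ u₂) := by
    intro x
    constructor
    · intro hx
      have hx' : x ∈ feistel ρ '' (𝒜 : Set (Vn n × Vn n)) := by rw [himg]; exact hx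
      obtain ⟨⟨u₁, u₂⟩, hu, hux⟩ := hx'
      exact ⟨u₁, u₂, hu, by rw [← hux]; rfl⟩
    · rintro ⟨u₁, u₂, hu, rfl⟩
      have : feistel ρ (u₁, u₂) ∈ feistel ρ '' (𝒜 : Set (Vn n × Vn n)) := ⟨_, hu, rfl⟩
      rw [himg] at this
      exact this
  refine ⟨part1, ?_⟩
  intro u₁ u₂ hu w
  obtain ⟨z', hz'⟩ := h (0, w)
  have e1 : ((w, ρ w) : Vn n × Vn n) + z' ∈ ℬ := by
    have hm : ((0, w) : Vn n × Vn n) ∈ coset (𝒜 : Set (Vn n × Vn n)) (0, w) := by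
      rw [mem_coset h2, h2]
      exact 𝒜.zero_mem
    have himgm : feistel ρ (0, w) ∈ coset (ℬ : Set (Vn n × Vn n)) z' := by
      rw [← hz']; exact ⟨_, hm, rfl⟩
    have := (mem_coset h2 _ _ _).1 himgm
    simpa [feistel] using this
  have e2 : ((u₂ + w, u₁ + ρ (u₂ + w)) : Vn n × Vn n) + z' ∈ ℬ := by
    have hm : ((u₁, u₂ + w) : Vn n × Vn n) ∈ coset (𝒜 : Set (Vn n × Vn n)) (0, w) := by
      rw [mem_coset h2]
      have heq : ((u₁, u₂ + w) : Vn n × Vn n) + (0, w) = (u₁, u₂) :=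
        Prod.ext (by simp) (by show u₂ + w + w = u₂; rw [add_assoc, addself, add_zero])
      rw [heq]; exact hu
    have himgm : feistel ρ (u₁, u₂ + w) ∈ coset (ℬ : Set (Vn n × Vn n)) z' := by
      rw [← hz']; exact ⟨_, hm, rfl⟩
    exact (mem_coset h2 _ _ _).1 himgm
  have e3 : ((u₂, ρ w + (u₁ + ρ (u₂ + w))) : Vn n × Vn n) ∈ ℬ := by
    have hsum := ℬ.add_mem e1 e2
    have heq : ((w, ρ w) : Vn n × Vn n) + z' + ((u₂ + w, u₁ + ρ (u₂ + w)) + z')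
        = (u₂, ρ w + (u₁ + ρ (u₂ + w))) := by
      have key1 : ∀ a b c : ZMod 2, (a + c) + ((b + a) + c) = b := by decide
      have key2 : ∀ a b c : ZMod 2, (a + c) + (b + c) = a + b := by decide
      refine Prod.ext ?_ ?_
      · show (w + z'.1) + ((u₂ + w) + z'.1) = u₂
        funext i
        exact key1 (w i) (u₂ i) (z'.1 i)
      · show (ρ w + z'.2) + ((u₁ + ρ (u₂ + w)) + z'.2) = ρ w + (u₁ + ρ (u₂ + w))
        funext i
        exact key2 (ρ w i) ((u₁ + ρ (u₂ + w)) i) (z'.2 i)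
    rwa [heq] at hsum
  obtain ⟨s₁, s₂, hs, heq⟩ := (part1 _).1 e3
  obtain ⟨h1eq, h2eq⟩ := Prod.ext_iff.1 heq
  have hs₂ : s₂ = u₂ := h1eq.symm
  rw [hs₂] at hs h2eq
  have hfin : ((u₁, u₂) : Vn n × Vn n) + (s₁, u₂) ∈ 𝒜 := 𝒜.add_mem hu hs
  have hfin' : ((u₁ + s₁, u₂ + u₂) : Vn n × Vn n) ∈ 𝒜 := hfin
  have hcomp : ((u₁ + s₁, u₂ + u₂) : Vn n × Vn n) = (ρ (u₂ + w) + ρ w + ρ u₂, 0) := by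
    refine Prod.ext ?_ (addself u₂)
    show u₁ + s₁ = ρ (u₂ + w) + ρ w + ρ u₂
    have key : ∀ a b c d e : ZMod 2, a + (b + c) = d + e → b + d = c + a + e := by decide
    funext i
    exact key (ρ w i) (u₁ i) (ρ (u₂ + w) i) (s₁ i) (ρ u₂ i) (congrFun h2eq i)
  rwa [hcomp] at hfin'

end Stmt14Aux

open Stmt14Aux in
theorem stmt_14 (n : ℕ) (ρ₁ ρ₂ : Equiv.Perm (Vn n))
    (hρ₁ : ρ₁ 0 = 0) (hρ₂ : ρ₂ 0 = 0)
    (haff₁ : ¬ IsAffinePerm ρ₁) (haff₂ : ¬ IsAffinePerm ρ₂)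
    (𝒰₁ 𝒰₂ : AddSubgroup (Vn n × Vn n))
    (h𝒰₁ : 𝒰₁ ≠ ⊥) (h𝒰₁' : 𝒰₁ ≠ ⊤) (h𝒰₂ : 𝒰₂ ≠ ⊥) (h𝒰₂' : 𝒰₂ ≠ ⊤)
    (h₁ : ∀ z : Vn n × Vn n, ∃ z' : Vn n × Vn n,
      feistel ρ₁ '' coset (𝒰₁ : Set (Vn n × Vn n)) z =
        coset (𝒰₂ : Set (Vn n × Vn n)) z')
    (h₂ : ∀ z : Vn n × Vn n, ∃ z' : Vn n × Vn n,
      feistel ρ₂ '' coset (𝒰₂ : Set (Vn n × Vn n)) z =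
        coset (𝒰₁ : Set (Vn n × Vn n)) z') :
    ∃ U₁ W₁ : AddSubgroup (Vn n),
      U₁ ≠ ⊥ ∧ U₁ ≠ ⊤ ∧ W₁ ≠ ⊥ ∧ W₁ ≠ ⊤ ∧
      ∀ v : Vn n, ∃ w : Vn n,
        (fun x => ρ₁ x) '' coset (U₁ : Set (Vn n)) v = coset (W₁ : Set (Vn n)) w := by
  classical
  have h2 : ∀ x : Vn n, x + x = 0 := addself
  have hneg : ∀ x : Vn n, -x = x := fun x => neg_eq_of_add_eq_zero_right (h2 x)
  obtain ⟨hU2, star1⟩ := feistel_struct ρ₁ hρ₁ 𝒰₁ 𝒰₂ h₁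
  obtain ⟨hU1, star2⟩ := feistel_struct ρ₂ hρ₂ 𝒰₂ 𝒰₁ h₂
  set P₁ : AddSubgroup (Vn n) := 𝒰₁.map (AddMonoidHom.snd (Vn n) (Vn n)) with hP₁def
  set P₂ : AddSubgroup (Vn n) := 𝒰₁.map (AddMonoidHom.fst (Vn n) (Vn n)) with hP₂def
  have memP₁ : ∀ b : Vn n, b ∈ P₁ ↔ ∃ a, (a, b) ∈ 𝒰₁ := by
    intro b
    rw [hP₁def, AddSubgroup.mem_map]
    constructor
    · rintro ⟨⟨a, b'⟩, hm, rfl⟩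
      exact ⟨a, hm⟩
    · rintro ⟨a, hm⟩
      exact ⟨(a, b), hm, rfl⟩
  have memP₂ : ∀ a : Vn n, a ∈ P₂ ↔ ∃ b, (a, b) ∈ 𝒰₁ := by
    intro a
    rw [hP₂def, AddSubgroup.mem_map]
    constructor
    · rintro ⟨⟨a', b⟩, hm, rfl⟩
      exact ⟨b, hm⟩
    · rintro ⟨b, hm⟩
      exact ⟨(a, b), hm, rfl⟩
  by_cases hP₁top : P₁ = ⊤
  · -- Case B : second projection is everything
    set K₁ : AddSubgroup (Vn n) := 𝒰₁.comap (AddMonoidHom.inl (Vn n) (Vn n)) with hK₁def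
    have memK₁ : ∀ a : Vn n, a ∈ K₁ ↔ (a, (0:Vn n)) ∈ 𝒰₁ := fun a => Iff.rfl
    have starAll : ∀ u w : Vn n, ρ₁ (u + w) + ρ₁ w + ρ₁ u ∈ K₁ := by
      intro u w
      have hu : u ∈ P₁ := hP₁top ▸ AddSubgroup.mem_top u
      obtain ⟨a, ha⟩ := (memP₁ u).1 hu
      exact (memK₁ _).2 (star1 a u ha w)
    have hKbot : K₁ ≠ ⊥ := by
      intro hb
      apply haff₁
      have hadd : ∀ u w : Vn n, ρ₁ (u + w) = ρ₁ u + ρ₁ w := by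
        intro u w
        have h0 : ρ₁ (u + w) + ρ₁ w + ρ₁ u = 0 := by
          have hm := starAll u w
          rw [hb, AddSubgroup.mem_bot] at hm
          exact hm
        have key : ∀ a b c : ZMod 2, a + b + c = 0 → a = c + b := by decide
        funext i
        exact key (ρ₁ (u+w) i) (ρ₁ w i) (ρ₁ u i) (congrFun h0 i)
      refine ⟨AddMonoidHom.toZModLinearMap 2 (AddMonoidHom.mk' (⇑ρ₁) hadd), 0, ?_⟩
      intro x
      simp [AddMonoidHom.toZModLinearMap]
    have hKtop : K₁ ≠ ⊤ := by
      intro ht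
      apply h𝒰₁'
      ext ⟨a, b⟩
      simp only [AddSubgroup.mem_top, iff_true]
      have hbm : b ∈ P₁ := hP₁top ▸ AddSubgroup.mem_top b
      obtain ⟨a', ha'⟩ := (memP₁ b).1 hbm
      have hk : (a + a', (0:Vn n)) ∈ 𝒰₁ := (memK₁ _).1 (ht ▸ AddSubgroup.mem_top (a + a'))
      have hsum := 𝒰₁.add_mem hk ha'
      have heq : ((a + a', 0) : Vn n × Vn n) + (a', b) = (a, b) := by
        refine Prod.ext ?_ (by show 0 + b = b; rw [zero_add])
        show a + a' + a' = a
        rw [add_assoc, h2, add_zero]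
      rwa [heq] at hsum
    let U : AddSubgroup (Vn n) :=
      { carrier := (⇑ρ₁) ⁻¹' (K₁ : Set (Vn n))
        add_mem' := by
          intro a b ha hb
          have he := starAll a b
          have hm : ρ₁ (a + b) + ρ₁ b + ρ₁ a + ρ₁ b + ρ₁ a ∈ K₁ :=
            K₁.add_mem (K₁.add_mem he hb) ha
          have heq : ρ₁ (a + b) + ρ₁ b + ρ₁ a + ρ₁ b + ρ₁ a = ρ₁ (a + b) := by
            have key : ∀ A B C : ZMod 2, A + B + C + B + C = A := by decide
            funext i; exact key _ _ _
          rw [heq] at hm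
          exact hm
        zero_mem' := by
          simp only [Set.mem_preimage, hρ₁]
          exact K₁.zero_mem
        neg_mem' := by
          intro a ha
          simp only [Set.mem_preimage, hneg]
          exact ha }
    have memU : ∀ x : Vn n, x ∈ U ↔ ρ₁ x ∈ K₁ := fun _ => Iff.rfl
    obtain ⟨k, hk, hk0⟩ : ∃ k, k ∈ K₁ ∧ k ≠ 0 := by
      by_contra hc
      push_neg at hc
      apply hKbot
      ext x
      simp only [AddSubgroup.mem_bot]
      exact ⟨fun hx => hc x hx, fun hx => hx ▸ K₁.zero_mem⟩
    obtain ⟨a₀, ha₀⟩ : ∃ a₀, a₀ ∉ K₁ := by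
      by_contra hc
      push_neg at hc
      exact hKtop (by ext x; simp [hc x])
    have hUbot : U ≠ ⊥ := by
      intro hbot
      have hmem : ρ₁.symm k ∈ U := by
        rw [memU, Equiv.apply_symm_apply]
        exact hk
      rw [hbot, AddSubgroup.mem_bot] at hmem
      apply hk0
      rw [← Equiv.apply_symm_apply ρ₁ k, hmem, hρ₁]
    have hUtop : U ≠ ⊤ := by
      intro htop
      apply ha₀
      have hmem : ρ₁.symm a₀ ∈ U := htop ▸ AddSubgroup.mem_top _
      rw [memU, Equiv.apply_symm_apply] at hmem
      exact hmem
    refine ⟨U, K₁, hUbot, hUtop, hKbot, hKtop, ?_⟩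
    intro v
    refine ⟨ρ₁ v, ?_⟩
    ext y
    simp only [Set.mem_image]
    rw [mem_coset h2]
    constructor
    · rintro ⟨x, hx, rfl⟩
      have hxU : ρ₁ (x + v) ∈ K₁ := (mem_coset h2 _ _ _).1 hx
      have he := starAll x v
      have heq : ρ₁ x + ρ₁ v = ρ₁ (x + v) + (ρ₁ (x + v) + ρ₁ v + ρ₁ x) := by
        have key : ∀ A B C : ZMod 2, C + B = A + (A + B + C) := by decide
        funext i; exact key _ _ _
      rw [heq]
      exact K₁.add_mem hxU he
    · intro hy
      refine ⟨ρ₁.symm y, ?_, Equiv.apply_symm_apply _ _⟩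
      rw [mem_coset h2]
      show ρ₁ (ρ₁.symm y + v) ∈ K₁
      have he := starAll (ρ₁.symm y) v
      rw [Equiv.apply_symm_apply] at he
      have heq : ρ₁ (ρ₁.symm y + v)
          = (ρ₁ (ρ₁.symm y + v) + ρ₁ v + y) + (y + ρ₁ v) := by
        have key : ∀ A B C : ZMod 2, A = (A + B + C) + (C + B) := by decide
        funext i; exact key _ _ _
      rw [heq]
      exact K₁.add_mem he hy
  · -- Case A : P₁ is proper
    have star1' : ∀ u, u ∈ P₁ → ∀ w, ρ₁ (u + w) + ρ₁ w + ρ₁ u ∈ P₂ := by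
      intro u hu w
      obtain ⟨a, ha⟩ := (memP₁ u).1 hu
      exact (memP₂ _).2 ⟨0, star1 a u ha w⟩
    have hP₁of𝒰₂fst : ∀ t₁ t₂ : Vn n, (t₁, t₂) ∈ 𝒰₂ → t₁ ∈ P₁ := by
      intro t₁ t₂ ht
      obtain ⟨u₁, u₂, hu, heq⟩ := (hU2 _).1 ht
      simp only [Prod.mk.injEq] at heq
      obtain ⟨h1, -⟩ := heq
      rw [memP₁ t₁]
      refine ⟨u₁, ?_⟩
      rw [h1]
      exact hu
    have hP₂of𝒰₂snd : ∀ t₁ t₂ : Vn n, (t₁, t₂) ∈ 𝒰₂ → t₂ ∈ P₂ := by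
      intro t₁ t₂ ht
      have h' : ((t₂, t₁ + ρ₂ t₂) : Vn n × Vn n) ∈ 𝒰₁ := (hU1 _).2 ⟨t₁, t₂, ht, rfl⟩
      exact (memP₂ _).2 ⟨_, h'⟩
    have F1 : ∀ u, u ∈ P₁ → ρ₁ u ∈ P₂ := by
      intro u hu
      obtain ⟨a, ha⟩ := (memP₁ u).1 hu
      have hm : ((u, a + ρ₁ u) : Vn n × Vn n) ∈ 𝒰₂ := (hU2 _).2 ⟨a, u, ha, rfl⟩
      have hb : a + ρ₁ u ∈ P₂ := hP₂of𝒰₂snd _ _ hm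
      have haP₂ : a ∈ P₂ := (memP₂ a).2 ⟨u, ha⟩
      have hs := P₂.add_mem haP₂ hb
      rwa [← add_assoc, h2, zero_add] at hs
    have F2 : ∀ p, p ∈ P₂ → ρ₂ p ∈ P₁ := by
      intro p hp
      obtain ⟨b, hb⟩ := (memP₂ p).1 hp
      obtain ⟨t₁, t₂, ht, heq⟩ := (hU1 _).1 hb
      simp only [Prod.mk.injEq] at heq
      obtain ⟨h1, hb2⟩ := heq
      have ht₁ : t₁ ∈ P₁ := hP₁of𝒰₂fst _ _ ht
      have hbP₁ : b ∈ P₁ := (memP₁ b).2 ⟨p, hb⟩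
      have hsum := P₁.add_mem ht₁ hbP₁
      rw [hb2, ← add_assoc, h2, zero_add, ← h1] at hsum
      exact hsum
    have hcard : Nat.card ↥P₁ = Nat.card ↥P₂ := by
      have i1 : Function.Injective (fun u : ↥P₁ => (⟨ρ₁ u, F1 u u.2⟩ : ↥P₂)) := by
        intro a b hab
        exact Subtype.ext (ρ₁.injective (congrArg Subtype.val hab))
      have i2 : Function.Injective (fun p : ↥P₂ => (⟨ρ₂ p, F2 p p.2⟩ : ↥P₁)) := by
        intro a b hab
        exact Subtype.ext (ρ₂.injective (congrArg Subtype.val hab))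
      exact le_antisymm (Nat.card_le_card_of_injective _ i1) (Nat.card_le_card_of_injective _ i2)
    have hP₁bot : P₁ ≠ ⊥ := by
      intro hb
      apply h𝒰₁
      have hP₂b : P₂ = ⊥ := by
        rw [← AddSubgroup.card_eq_one, ← hcard, hb, AddSubgroup.card_bot]
      ext ⟨a, b⟩
      simp only [AddSubgroup.mem_bot]
      constructor
      · intro hx
        have hbP : b ∈ P₁ := (memP₁ b).2 ⟨a, hx⟩
        have haP : a ∈ P₂ := (memP₂ a).2 ⟨b, hx⟩
        rw [hb, AddSubgroup.mem_bot] at hbP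
        rw [hP₂b, AddSubgroup.mem_bot] at haP
        rw [haP, hbP]
        rfl
      · intro hx
        rw [hx]
        exact 𝒰₁.zero_mem
    have hP₂top : P₂ ≠ ⊤ := by
      intro ht
      apply hP₁top
      have hc' : Nat.card ↥P₁ = Nat.card (Vn n) := by
        rw [hcard, ht, AddSubgroup.card_top]
      exact P₁.eq_top_of_card_eq hc'
    have hP₂bot : P₂ ≠ ⊥ := by
      intro hb
      apply hP₁bot
      rw [← AddSubgroup.card_eq_one, hcard, hb, AddSubgroup.card_bot]
    refine ⟨P₁, P₂, hP₁bot, hP₁top, hP₂bot, hP₂top, ?_⟩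
    intro v
    refine ⟨ρ₁ v, ?_⟩
    have hgmem : ∀ u : ↥P₁, ρ₁ ((u : Vn n) + v) + ρ₁ v ∈ P₂ := by
      intro u
      have he := star1' u u.2 v
      have hr := F1 u u.2
      have heq : ρ₁ ((u:Vn n) + v) + ρ₁ v
          = (ρ₁ ((u:Vn n) + v) + ρ₁ v + ρ₁ u) + ρ₁ u := by
        have key : ∀ A B C : ZMod 2, A + B = (A + B + C) + C := by decide
        funext i; exact key _ _ _
      rw [heq]
      exact P₂.add_mem he hr
    set g : ↥P₁ → ↥P₂ := fun u => ⟨ρ₁ ((u : Vn n) + v) + ρ₁ v, hgmem u⟩ with hgdef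
    have hginj : Function.Injective g := by
      intro a b hab
      have h' : ρ₁ ((a : Vn n) + v) + ρ₁ v = ρ₁ ((b : Vn n) + v) + ρ₁ v :=
        congrArg Subtype.val hab
      exact Subtype.ext (add_right_cancel (ρ₁.injective (add_right_cancel h')))
    have hgsur : Function.Surjective g :=
      ((Nat.bijective_iff_injective_and_card g).2 ⟨hginj, hcard⟩).2
    ext y
    simp only [Set.mem_image]
    rw [mem_coset h2]
    constructor
    · rintro ⟨x, hx, rfl⟩
      have hxv : x + v ∈ P₁ := (mem_coset h2 _ _ _).1 hx
      have hm := hgmem ⟨x + v, hxv⟩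
      have heq : (x + v) + v = x := by rw [add_assoc, h2, add_zero]
      simp only [heq] at hm
      exact hm
    · intro hy
      obtain ⟨u, hu⟩ := hgsur ⟨y + ρ₁ v, hy⟩
      have h' : ρ₁ ((u : Vn n) + v) + ρ₁ v = y + ρ₁ v := congrArg Subtype.val hu
      have h'' := add_right_cancel h'
      refine ⟨(u : Vn n) + v, ?_, h''⟩
      rw [mem_coset h2]
      have heq : (u : Vn n) + v + v = (u : Vn n) := by rw [add_assoc, h2, add_zero]
      rw [heq]
      exact u.2
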